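/- Let A be a semisimple regular commutative Banach algebra satisfying Ditkin's condition. Then A satisfies condition (M). -/
import Mathlib

open WeakDual Topology Filter

variable (A : Type*) [NormedCommRing A] [NormedAlgebra ℂ A]

/-- The cozero set of the Gelfand transform of `a`. -/
def gelfCoz {A : Type*} [NormedCommRing A] [NormedAlgebra ℂ A] (a : A) :
    Set (characterSpace ℂ A) := {x | x a ≠ 0}

/-- The support of the Gelfand transform of `a`. -/
def gelfSupp {A : Type*} [NormedCommRing A] [NormedAlgebra ℂ A] (a : A) :
    Set (characterSpace ℂ A) := closure (gelfCoz a)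

/-- `a` has compactly supported Gelfand transform. -/
def HasCompactGelfandSupport {A : Type*} [NormedCommRing A] [NormedAlgebra ℂ A] (a : A) :
    Prop := IsCompact (gelfSupp a)

/-- A commutative Banach algebra is Tauberian if elements with compactly supported
Gelfand transform are dense. -/
def Tauberian : Prop := Dense {a : A | HasCompactGelfandSupport a}

/-- Regularity: characters can be separated from closed sets by Gelfand transforms. -/
def Regular : Prop :=
  ∀ (x : characterSpace ℂ A) (U : Set (characterSpace ℂ A)), IsOpen U → x ∈ U →
    ∃ a : A, x a = 1 ∧ ∀ y : characterSpace ℂ A, y ∉ U → y a = 0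

/-- Semisimplicity: the Gelfand transform is injective. -/
def Semisimple : Prop := ∀ a : A, (∀ x : characterSpace ℂ A, x a = 0) → a = 0

/-- Condition (M). -/
def ConditionM : Prop :=
  Regular A ∧
  ∀ (x : characterSpace ℂ A) (a : A), x a = 0 →
    ∀ U ∈ 𝓝 x, ∀ ε > (0:ℝ), ∃ b : A,
      (∃ V ∈ 𝓝 x, ∀ y ∈ V, y b = 1) ∧ gelfSupp b ⊆ U ∧ ‖b * a‖ < ε

/-- An approximate identity bounded in norm by `D`. -/
def BddApproxId (D : ℝ) : Prop :=
  ∃ (ι : Type) (l : Filter ι) (_ : l.NeBot) (e : ι → A),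
    (∀ i, ‖e i‖ ≤ D) ∧ ∀ a : A, Tendsto (fun i => a * e i) l (𝓝 a)

/-- `D`-uniform regularity. -/
def DUniformlyRegular (D : ℝ) : Prop :=
  ∀ (x : characterSpace ℂ A) (U : Set (characterSpace ℂ A)), IsOpen U → x ∈ U →
    ∀ ε > (0:ℝ), ∃ a : A, x a = 1 ∧ gelfSupp a ⊆ U ∧ ‖a‖ ≤ D + ε

/-- Ditkin's condition for a commutative Banach algebra. -/
def DitkinCondition : Prop :=
  (∀ (a : A) (x : characterSpace ℂ A), x a = 0 →
      ∀ ε > (0:ℝ), ∃ b : A, (∃ V ∈ 𝓝 x, ∀ y ∈ V, y b = 0) ∧ ‖a * b - a‖ < ε) ∧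
  (¬ IsCompact (Set.univ : Set (characterSpace ℂ A)) →
      ∀ (a : A), ∀ ε > (0:ℝ), ∃ b : A, HasCompactGelfandSupport b ∧ ‖a * b - a‖ < ε)

/-- The ideal of elements whose Gelfand transform vanishes on `K`. -/
def kernelIdeal {A : Type*} [NormedCommRing A] [NormedAlgebra ℂ A]
    (K : Set (characterSpace ℂ A)) : Ideal A where
  carrier := {b | ∀ y ∈ K, y b = 0}
  add_mem' := fun {a b} ha hb y hy => by simp [map_add, ha y hy, hb y hy]
  zero_mem' := fun y _ => map_zero y
  smul_mem' := fun r b hb y hy => by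
    simp only [smul_eq_mul, map_mul, hb y hy, mul_zero]

/-- Existence of local units in a regular commutative Banach algebra. -/
lemma exists_local_unit {A : Type*} [NormedCommRing A] [NormedAlgebra ℂ A]
    [CompleteSpace A] (hreg : Regular A)
    (x : characterSpace ℂ A) (U : Set (characterSpace ℂ A)) (hU : U ∈ 𝓝 x) :
    ∃ u : A, (∃ K ∈ 𝓝 x, ∀ y ∈ K, y u = 1) ∧ gelfSupp u ⊆ U := by
  obtain ⟨U₁, hU₁mem, hU₁closed, hU₁sub⟩ := exists_mem_nhds_isClosed_subset hU
  obtain ⟨v, hvx, hv0⟩ := hreg x (interior U₁) isOpen_interior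
    (mem_interior_iff_mem_nhds.mpr hU₁mem)
  have hΩopen : IsOpen {y : characterSpace ℂ A | y v ≠ 0} :=
    isOpen_compl_iff.mpr <| (isClosed_singleton (x := (0:ℂ))).preimage
      ((WeakDual.eval_continuous v).comp continuous_subtype_val)
  have hxΩ : x ∈ {y : characterSpace ℂ A | y v ≠ 0} := by simp [hvx]
  obtain ⟨K, hKmem, hKclosed, hKsub⟩ :=
    exists_mem_nhds_isClosed_subset (hΩopen.mem_nhds hxΩ)
  have htop : Ideal.span {v} ⊔ kernelIdeal K = ⊤ := by
    by_contra hne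
    obtain ⟨M, hMmax, hJM⟩ := Ideal.exists_le_maximal _ hne
    have hφ := M.toCharacterSpace_apply_eq_zero_of_mem (a := v)
      (hJM (le_sup_left (α := Ideal A) (Ideal.mem_span_singleton_self v)))
    set φ := M.toCharacterSpace with hφdef
    have hφK : φ ∈ K := by
      by_contra hφK
      obtain ⟨w, hwφ, hw0⟩ := hreg φ Kᶜ hKclosed.isOpen_compl hφK
      have : w ∈ kernelIdeal K := fun y hy => hw0 y (by simpa using hy)
      have := M.toCharacterSpace_apply_eq_zero_of_mem
        (hJM (le_sup_right (α := Ideal A) this))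
      rw [← hφdef] at this
      rw [this] at hwφ
      exact zero_ne_one hwφ
    exact hKsub hφK hφ
  have h1 : (1 : A) ∈ Ideal.span {v} ⊔ kernelIdeal K := htop ▸ Submodule.mem_top
  obtain ⟨s, hs, d, hd, hsd⟩ := Submodule.mem_sup.mp h1
  obtain ⟨h, rfl⟩ := Ideal.mem_span_singleton'.mp hs
  refine ⟨h * v, ⟨K, hKmem, fun y hy => ?_⟩, ?_⟩
  · have : y (h * v) + y d = 1 := by rw [← map_add, hsd, map_one]
    rwa [hd y hy, add_zero] at this
  · have hcoz : gelfCoz (h * v) ⊆ U₁ := fun y hy => by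
      have hyv : y v ≠ 0 := fun h0 => hy (by simp [gelfCoz, map_mul, h0])
      have : y ∈ interior U₁ := by
        by_contra hmem
        exact hyv (hv0 y hmem)
      exact interior_subset this
    exact fun y hy => hU₁sub (closure_minimal hcoz hU₁closed hy)

/-- a semisimple regular commutative Banach algebra satisfying Ditkin's
condition (which, as is known, has a `1`-bounded approximate identity) satisfies
condition (M). -/
theorem ditkin_implies_conditionM
    [CompleteSpace A] (hsemi : Semisimple A) (hreg : Regular A)
    (hditkin : DitkinCondition A) (hai : BddApproxId A 1) :
    ConditionM A := by
  refine ⟨hreg, fun x a hxa U hU ε hε => ?_⟩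
  obtain ⟨u, ⟨K, hKmem, hK1⟩, husupp⟩ := exists_local_unit hreg x U hU
  have hεpos : ε / (‖u‖ + 1) > 0 := div_pos hε (by positivity)
  obtain ⟨c, ⟨V, hVmem, hV0⟩, hc⟩ := hditkin.1 a x hxa _ hεpos
  refine ⟨u - u * c, ⟨K ∩ V, inter_mem hKmem hVmem, fun y hy => ?_⟩, ?_, ?_⟩
  · rw [map_sub, map_mul, hK1 y hy.1, hV0 y hy.2, mul_zero, sub_zero]
  · refine subset_trans (closure_mono fun y hy => ?_) husupp
    intro h0
    apply hy
    simp [gelfCoz, map_sub, map_mul, h0]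
  · have heq : (u - u * c) * a = u * (a - a * c) := by ring
    rw [heq]
    calc ‖u * (a - a * c)‖ ≤ ‖u‖ * ‖a - a * c‖ := norm_mul_le _ _
      _ = ‖u‖ * ‖a * c - a‖ := by rw [norm_sub_rev]
      _ < (‖u‖ + 1) * (ε / (‖u‖ + 1)) := by
          apply mul_lt_mul' (le_of_lt (lt_add_one _)) hc (norm_nonneg _)
          positivity
      _ = ε := by field_simp
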